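/- Let C be a dagger category and f : A ⟶ B a morphism. The cospan consisting of f : A ⟶ B and 𝟙_B : B ⟶ B has a dagger pullback (a dagger limit of the cospan diagram with Ω consisting of the two feet A and B) if and only if f is a partial isometry. Consequently, if a dagger category has all dagger pullbacks, then every morphism in it is a partial isometry. -/

import Mathlib

open CategoryTheory

universe v u v₁ u₁ v₂ u₂

class DaggerCategory (C : Type u) [Category.{v} C] where
  dag : ∀ {A B : C}, (A ⟶ B) → (B ⟶ A)
  dag_id : ∀ (A : C), dag (𝟙 A) = 𝟙 A
  dag_comp : ∀ {A B X : C} (f : A ⟶ B) (g : B ⟶ X), dag (f ≫ g) = dag g ≫ dag f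
  dag_dag : ∀ {A B : C} (f : A ⟶ B), dag (dag f) = f

postfix:max "†" => DaggerCategory.dag

section Defs

variable {C : Type u} [Category.{v} C] [DaggerCategory C]

/-- A morphism `f` is a partial isometry if `f ∘ f† ∘ f = f`. -/
def IsPartialIsometry {A B : C} (f : A ⟶ B) : Prop :=
  f ≫ f† ≫ f = f

/-- A morphism `f : A ⟶ B` is unitary if `f† ∘ f = 𝟙 A` and `f ∘ f† = 𝟙 B`. -/
def IsUnitary {A B : C} (f : A ⟶ B) : Prop :=
  f ≫ f† = 𝟙 A ∧ f† ≫ f = 𝟙 B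

/-- A morphism `f` is dagger monic (an isometry) if `f† ∘ f = 𝟙`. -/
def DaggerMonic {A B : C} (f : A ⟶ B) : Prop :=
  f ≫ f† = 𝟙 A

/-- `(L, l)` is a limit cone over the diagram `D`. -/
def IsLimitCone {J : Type u₁} [Category.{v₁} J] (D : J ⥤ C) (L : C)
    (l : ∀ j : J, L ⟶ D.obj j) : Prop :=
  (∀ {j j' : J} (f : j ⟶ j'), l j ≫ D.map f = l j') ∧
  (∀ (M : C) (m : ∀ j : J, M ⟶ D.obj j),
    (∀ {j j' : J} (f : j ⟶ j'), m j ≫ D.map f = m j') →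
    ∃! g : M ⟶ L, ∀ j : J, g ≫ l j = m j)

/-- A class of objects `Ω` is weakly initial when every object admits a morphism
from some member of `Ω`. -/
def WeaklyInitial {J : Type u₁} [Category.{v₁} J] (Ω : Set J) : Prop :=
  ∀ B : J, ∃ A ∈ Ω, Nonempty (A ⟶ B)

/-- `(L, l)` is a dagger limit of `(D, Ω)`: a limit cone whose legs at `Ω` are
partial isometries with pairwise commuting induced projections. -/
def IsDaggerLimit {J : Type u₁} [Category.{v₁} J] (D : J ⥤ C) (Ω : Set J) (L : C)
    (l : ∀ j : J, L ⟶ D.obj j) : Prop :=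
  IsLimitCone D L l ∧
  (∀ j ∈ Ω, IsPartialIsometry (l j)) ∧
  (∀ j ∈ Ω, ∀ j' ∈ Ω,
    (l j ≫ (l j)†) ≫ (l j' ≫ (l j')†) = (l j' ≫ (l j')†) ≫ (l j ≫ (l j)†))

end Defs

open CategoryTheory.Limits DaggerCategory in
theorem key {C : Type u} [Category.{v} C] [DaggerCategory C] {A B : C} (f : A ⟶ B) :
    (∃ (P : C) (l : ∀ j : WalkingCospan, P ⟶ (cospan f (𝟙 B)).obj j),
        IsDaggerLimit (cospan f (𝟙 B))
          {WalkingCospan.left, WalkingCospan.right} P l) ↔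
      IsPartialIsometry f := by
  constructor
  · rintro ⟨P, l, ⟨⟨hcone, huniv⟩, hpi, -⟩⟩
    have h1 : l .left ≫ f = l .one := hcone WalkingCospan.Hom.inl
    have h2 : l .right = l .one := by
      have := hcone WalkingCospan.Hom.inr; exact (Category.comp_id (l .right)).symm.trans this
    obtain ⟨g, hg, -⟩ := huniv A (fun j => match j with
      | .left => 𝟙 A | .right => f | .one => f) (by
        rintro j j' (_ | ⟨⟨⟩⟩) <;> simp)
    have hgl : g ≫ l .left = 𝟙 A := hg .left
    have hgr : g ≫ l .right = f := hg .right
    -- l .left ≫ g = 𝟙 P via uniqueness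
    obtain ⟨h, -, hhu⟩ := huniv P l (fun k => hcone k)
    have e1 : l .left ≫ g = 𝟙 P := by
      rw [hhu (l .left ≫ g), hhu (𝟙 P)]
      · intro j; simp
      · intro j
        match j with
        | .left => erw [Category.assoc, hgl]; exact Category.comp_id _
        | .right => erw [Category.assoc, hgr, h1, h2]
        | .one => erw [Category.assoc, hg .one, h1]
    have hpl : l .left ≫ (l .left)† ≫ l .left = l .left := by
      have := hpi .left (by left; rfl)
      simpa [IsPartialIsometry] using this
    have hpr : l .right ≫ (l .right)† ≫ l .right = l .right := by
      have := hpi .right (by right; rfl)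
      simpa [IsPartialIsometry] using this
    -- l .left is unitary
    have u1 : (l .left)† ≫ l .left = 𝟙 A := by
      have := congrArg (fun x => g ≫ x) hpl
      erw [← Category.assoc, hgl, Category.id_comp] at this
      exact this
    have u2 : l .left ≫ (l .left)† = 𝟙 P := by
      have := congrArg (fun x => x ≫ g) hpl
      erw [Category.assoc, Category.assoc, e1, Category.comp_id] at this
      exact this
    have hgdag : g = (l .left)† := by
      have : g = g ≫ l .left ≫ (l .left)† := by rw [u2, Category.comp_id]
      erw [this, ← Category.assoc, hgl, Category.id_comp]
    have hf : f = (l .left)† ≫ l .right := by erw [← hgdag, hgr]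
    show f ≫ f† ≫ f = f
    erw [hf, dag_comp, dag_dag]
    calc ((l .left)† ≫ l .right) ≫ ((l .right)† ≫ l .left) ≫ (l .left)† ≫ l .right
        = (l .left)† ≫ (l .right ≫ (l .right)†) ≫ (l .left ≫ (l .left)†) ≫ l .right := by
          simp only [Category.assoc]
      _ = (l .left)† ≫ l .right := by
          rw [u2, Category.id_comp, Category.assoc, hpr]
  · intro hf
    refine ⟨A, fun j => match j with | .left => 𝟙 A | .right => f | .one => f, ?_, ?_, ?_⟩
    · constructor
      · rintro j j' (_ | ⟨⟨⟩⟩) <;> simp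
      · intro M m hm
        refine ⟨m .left, fun j => ?_, fun g hg => ?_⟩
        · match j with
          | .left => exact Category.comp_id _
          | .right =>
            have h1 : m .left ≫ f = m .one := hm WalkingCospan.Hom.inl
            have h2 : m .right ≫ 𝟙 B = m .one := hm WalkingCospan.Hom.inr
            exact h1.trans (h2.symm.trans (Category.comp_id _))
          | .one => exact hm WalkingCospan.Hom.inl
        · have := hg .left
          simpa using this
    · rintro j (rfl | rfl)
      · show 𝟙 A ≫ (𝟙 A)† ≫ 𝟙 A = 𝟙 A
        simp [dag_id]
      · exact hf
    · rintro j (rfl | rfl) j' (rfl | rfl) <;>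
        simp only [] <;> simp [dag_id]

open CategoryTheory.Limits in
theorem daggerPullback_along_id_iff_partialIsometry :
    (∀ {C : Type u} [Category.{v} C] [DaggerCategory C] {A B : C} (f : A ⟶ B),
      (∃ (P : C) (l : ∀ j : WalkingCospan, P ⟶ (cospan f (𝟙 B)).obj j),
        IsDaggerLimit (cospan f (𝟙 B))
          {WalkingCospan.left, WalkingCospan.right} P l) ↔
      IsPartialIsometry f) ∧
    (∀ {C : Type u} [Category.{v} C] [DaggerCategory C],
      (∀ {A B X : C} (f : A ⟶ X) (g : B ⟶ X),
        ∃ (P : C) (l : ∀ j : WalkingCospan, P ⟶ (cospan f g).obj j),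
          IsDaggerLimit (cospan f g)
            {WalkingCospan.left, WalkingCospan.right} P l) →
      ∀ {A B : C} (f : A ⟶ B), IsPartialIsometry f) := by
  constructor
  · intro C _ _ A B f
    exact key f
  · intro C _ _ hall A B f
    exact (key f).mp (hall f (𝟙 B))
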